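/- Let c₁, c₂, ν ∈ ℝ with ν ≠ 0 and sin((c₁−c₂)ν) ≠ 0. Then the vector d = (d₁, d₂) with d₁ = (cos(c₂ν) − cos((1−c₂)ν))/(ν·sin((c₁−c₂)ν)) and d₂ = (cos((1−c₁)ν) − cos(c₁ν))/(ν·sin((c₁−c₂)ν)) is the unique solution of the pair of equations ν·(d₁·sin(c₁ν) + d₂·sin(c₂ν)) = 1 − cos ν and ν·(d₁·cos(c₁ν) + d₂·cos(c₂ν)) = sin ν. -/

import Mathlib

open Real

theorem stmt_19 (c₁ c₂ ν : ℝ) (hν : ν ≠ 0)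
    (hden : Real.sin ((c₁ - c₂) * ν) ≠ 0)
    (d₁ d₂ : ℝ)
    (hd₁ : d₁ = (Real.cos (c₂ * ν) - Real.cos ((1 - c₂) * ν)) /
      (ν * Real.sin ((c₁ - c₂) * ν)))
    (hd₂ : d₂ = (Real.cos ((1 - c₁) * ν) - Real.cos (c₁ * ν)) /
      (ν * Real.sin ((c₁ - c₂) * ν))) :
    (ν * (d₁ * Real.sin (c₁ * ν) + d₂ * Real.sin (c₂ * ν)) = 1 - Real.cos ν) ∧
    (ν * (d₁ * Real.cos (c₁ * ν) + d₂ * Real.cos (c₂ * ν)) = Real.sin ν) ∧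
    ∀ e₁ e₂ : ℝ,
      (ν * (e₁ * Real.sin (c₁ * ν) + e₂ * Real.sin (c₂ * ν)) = 1 - Real.cos ν) →
      (ν * (e₁ * Real.cos (c₁ * ν) + e₂ * Real.cos (c₂ * ν)) = Real.sin ν) →
      e₁ = d₁ ∧ e₂ = d₂ := by
  have h1 : (1 - c₂) * ν = ν - c₂ * ν := by ring
  have h2 : (1 - c₁) * ν = ν - c₁ * ν := by ring
  have h3 : (c₁ - c₂) * ν = c₁ * ν - c₂ * ν := by ring
  have hs : Real.sin ((c₁ - c₂) * ν)
      = Real.sin (c₁ * ν) * Real.cos (c₂ * ν) - Real.cos (c₁ * ν) * Real.sin (c₂ * ν) := by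
    rw [h3, Real.sin_sub]
  have hc1 : Real.cos ((1 - c₂) * ν)
      = Real.cos ν * Real.cos (c₂ * ν) + Real.sin ν * Real.sin (c₂ * ν) := by
    rw [h1, Real.cos_sub]
  have hc2 : Real.cos ((1 - c₁) * ν)
      = Real.cos ν * Real.cos (c₁ * ν) + Real.sin ν * Real.sin (c₁ * ν) := by
    rw [h2, Real.cos_sub]
  have hsne : Real.sin (c₁ * ν) * Real.cos (c₂ * ν) - Real.cos (c₁ * ν) * Real.sin (c₂ * ν) ≠ 0 := by
    rw [← hs]; exact hden
  have hden' : ν * Real.sin ((c₁ - c₂) * ν) ≠ 0 := mul_ne_zero hν hden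
  have e1 : ν * (d₁ * Real.sin (c₁ * ν) + d₂ * Real.sin (c₂ * ν)) = 1 - Real.cos ν := by
    rw [hd₁, hd₂]
    rw [hs, hc1, hc2]
    have hsne2 : Real.cos (ν * c₂) * Real.sin (ν * c₁) - Real.sin (ν * c₂) * Real.cos (ν * c₁) ≠ 0 := by
      rw [mul_comm ν c₁, mul_comm ν c₂]; intro h; apply hsne; linarith
    field_simp
    ring
  have e2 : ν * (d₁ * Real.cos (c₁ * ν) + d₂ * Real.cos (c₂ * ν)) = Real.sin ν := by
    rw [hd₁, hd₂]
    rw [hs, hc1, hc2]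
    have hsne2 : Real.cos (ν * c₂) * Real.sin (ν * c₁) - Real.sin (ν * c₂) * Real.cos (ν * c₁) ≠ 0 := by
      rw [mul_comm ν c₁, mul_comm ν c₂]; intro h; apply hsne; linarith
    field_simp
    ring
  refine ⟨e1, e2, ?_⟩
  intro e₁ e₂ he1 he2
  have k1 : ν * ((e₁ - d₁) * Real.sin (c₁ * ν) + (e₂ - d₂) * Real.sin (c₂ * ν)) = 0 := by
    have := sub_eq_zero.mpr (he1.trans e1.symm)
    linear_combination this
  have k2 : ν * ((e₁ - d₁) * Real.cos (c₁ * ν) + (e₂ - d₂) * Real.cos (c₂ * ν)) = 0 := by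
    have := sub_eq_zero.mpr (he2.trans e2.symm)
    linear_combination this
  have k1' : (e₁ - d₁) * Real.sin (c₁ * ν) + (e₂ - d₂) * Real.sin (c₂ * ν) = 0 :=
    (mul_eq_zero.mp k1).resolve_left hν
  have k2' : (e₁ - d₁) * Real.cos (c₁ * ν) + (e₂ - d₂) * Real.cos (c₂ * ν) = 0 :=
    (mul_eq_zero.mp k2).resolve_left hν
  have w1 : (e₁ - d₁) * (Real.sin (c₁ * ν) * Real.cos (c₂ * ν) - Real.cos (c₁ * ν) * Real.sin (c₂ * ν)) = 0 := by
    linear_combination Real.cos (c₂ * ν) * k1' - Real.sin (c₂ * ν) * k2'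
  have w2 : (e₂ - d₂) * (Real.sin (c₁ * ν) * Real.cos (c₂ * ν) - Real.cos (c₁ * ν) * Real.sin (c₂ * ν)) = 0 := by
    linear_combination Real.sin (c₁ * ν) * k2' - Real.cos (c₁ * ν) * k1'
  constructor
  · have := (mul_eq_zero.mp w1).resolve_right hsne
    linarith
  · have := (mul_eq_zero.mp w2).resolve_right hsne
    linarith
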